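/- Let A be a Hopf algebra, R a left A-module algebra via ▷, L a subalgebra of R, and π: R → R a symmetric A-projection onto L. Then L is a symmetric partial A-module algebra via a · x := π(a ▷ x); in particular a·(x(b·y)) = (a₁·x)(a₂b·y) and a·((b·x)y) = (a₁b·x)(a₂·y) for all a,b ∈ A, x,y ∈ L. -/
import Mathlib


open TensorProduct

variable {k A R : Type*}

/-- Sweedler-style convolution: `conv f g = Σ f(a₁) * g(a₂)` as a linear map on `A`. -/
noncomputable def conv [Field k] [Ring A] [HopfAlgebra k A] [Ring R] [Algebra k R]
    (f g : A →ₗ[k] R) : A →ₗ[k] R :=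
  TensorProduct.lift ((LinearMap.mul k R).compl₁₂ f g) ∘ₗ Coalgebra.comul


private lemma pi_conv [Field k] [Ring A] [HopfAlgebra k A] [Ring R] [Algebra k R]
    (π : R →ₗ[k] R) (hπ_mul : ∀ x y : R, π (x * y) = π x * π y)
    (f g : A →ₗ[k] R) : π ∘ₗ conv f g = conv (π ∘ₗ f) (π ∘ₗ g) := by
  unfold conv
  rw [← LinearMap.comp_assoc]
  congr 1
  apply TensorProduct.ext'
  intro a b
  simp [hπ_mul]

/-- If `R` is a left `A`-module algebra, `L ⊆ R` a subalgebra and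
`π : R → R` a symmetric `A`-projection onto `L`, then `a · x := π(a ▷ x)` makes `L`
a symmetric partial `A`-module algebra: `a·(x(b·y)) = Σ (a₁·x)(a₂b·y)` and
`a·((b·x)y) = Σ (a₁b·x)(a₂·y)` for `x, y ∈ L`. -/
theorem symmetric_A_projection_induces_partial_action
    [Field k] [Ring A] [HopfAlgebra k A] [Ring R] [Algebra k R]
    (act : A →ₗ[k] R →ₗ[k] R)
    -- R is a left A-module algebra:
    (hact_one : ∀ x : R, act 1 x = x)
    (hact_mul : ∀ (a b : A) (x : R), act (a * b) x = act a (act b x))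
    (hact_alg : ∀ (a : A) (x y : R), act a (x * y) = conv (act.flip x) (act.flip y) a)
    -- L is a subalgebra of R:
    (L : Submodule k R) (hL_mul : ∀ x ∈ L, ∀ y ∈ L, x * y ∈ L)
    -- π is a symmetric A-projection over L:
    (π : R →ₗ[k] R)
    (hπ_mul : ∀ x y : R, π (x * y) = π x * π y)
    (hπ_range : ∀ r : R, π r ∈ L)
    (hπ_fix : ∀ x ∈ L, π x = x)
    (hπ_proj : ∀ (a b : A), ∀ x ∈ L, ∀ y ∈ L,
      π (act a (x * π (act b y))) = π (act a (x * act b y)))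
    (hπ_symm : ∀ (a b : A), ∀ x ∈ L, ∀ y ∈ L,
      π (act a (π (act b x) * y)) = π (act a (act b x * y))) :
    -- the induced partial action a · x := π (a ▷ x), bundled as pact:
    ∀ pact : A →ₗ[k] R →ₗ[k] R,
      pact = (LinearMap.llcomp k R R R π) ∘ₗ act →
      -- a·(x(b·y)) = Σ (a₁·x)(a₂b·y)
      (∀ (a b : A), ∀ x ∈ L, ∀ y ∈ L,
        pact a (x * pact b y) =
          conv (pact.flip x) ((pact.flip y) ∘ₗ LinearMap.mulRight k b) a) ∧
      -- a·((b·x)y) = Σ (a₁b·x)(a₂·y)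
      (∀ (a b : A), ∀ x ∈ L, ∀ y ∈ L,
        pact a (pact b x * y) =
          conv ((pact.flip x) ∘ₗ LinearMap.mulRight k b) (pact.flip y) a) := by
  intro pact hpact
  have hpe : ∀ (a : A) (r : R), pact a r = π (act a r) := by
    intro a r; rw [hpact]; rfl
  constructor
  · intro a b x hx y hy
    rw [hpe, hpe, hπ_proj a b x hx y hy, hact_alg]
    have := congrArg (fun f : A →ₗ[k] R => f a)
      (pi_conv π hπ_mul (act.flip x) (act.flip (act b y)))
    simp only [LinearMap.comp_apply] at this
    rw [this]
    have h1 : π ∘ₗ act.flip x = pact.flip x := by ext c; simp [hpe]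
    have h2 : π ∘ₗ act.flip (act b y) = pact.flip y ∘ₗ LinearMap.mulRight k b := by
      ext c; simp [hpe, ← hact_mul]
    rw [h1, h2]
  · intro a b x hx y hy
    rw [hpe, hpe, hπ_symm a b x hx y hy, hact_alg]
    have := congrArg (fun f : A →ₗ[k] R => f a)
      (pi_conv π hπ_mul (act.flip (act b x)) (act.flip y))
    simp only [LinearMap.comp_apply] at this
    rw [this]
    have h1 : π ∘ₗ act.flip (act b x) = pact.flip x ∘ₗ LinearMap.mulRight k b := by
      ext c; simp [hpe, ← hact_mul]
    have h2 : π ∘ₗ act.flip y = pact.flip y := by ext c; simp [hpe]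
    rw [h1, h2]
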